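/- Let G = (U,α) and H = (V,β) be weighted graphs with label functions ψ_G : U → 𝓐 and ψ_H : V → 𝓐 that are both locally injective (the restriction of ψ_G to each neighborhood N_G(u) = {u' : α(u,u') > 0} is injective, and similarly for ψ_H), and let c_Ψ(u,v) = 1 if ψ_G(u) ≠ ψ_H(v) and 0 otherwise. Suppose ρ_{c_Ψ}(G,H) = 0, and let γ ∈ J(α,β) satisfy ⟨c_Ψ, r_γ⟩ = 0. Then for any (u,v) with r_γ(u,v) > 0: if γ((u,v),(u₁,v₁)) > 0 and γ((u,v),(u₁,v₁')) > 0, then v₁ = v₁'; and if γ((u,v),(u₁,v₁)) > 0 and γ((u,v),(u₁',v₁)) > 0, then u₁ = u₁'. -/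
import Mathlib


open Finset

def IsWeightFunction {U : Type*} [Fintype U] (α : U → U → ℝ) : Prop :=
  (∀ u u', 0 ≤ α u u') ∧ (∀ u u', α u u' = α u' u) ∧ (∑ u, ∑ u', α u u' = 1)

noncomputable def marginal {U : Type*} [Fintype U] (α : U → U → ℝ) (u : U) : ℝ :=
  ∑ u', α u u'

def IsWeightJoining {U V : Type*} [Fintype U] [Fintype V]
    (α : U → U → ℝ) (β : V → V → ℝ) (γ : U × V → U × V → ℝ) : Prop :=
  IsWeightFunction γ ∧
  (∀ u, ∑ v, marginal γ (u, v) = marginal α u) ∧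
  (∀ v, ∑ u, marginal γ (u, v) = marginal β v) ∧
  (∀ u u' v, marginal α u * ∑ v', γ (u, v) (u', v') = α u u' * marginal γ (u, v)) ∧
  (∀ v v' u, marginal β v * ∑ u', γ (u, v) (u', v') = β v v' * marginal γ (u, v))

def weightJoinings {U V : Type*} [Fintype U] [Fintype V]
    (α : U → U → ℝ) (β : V → V → ℝ) : Set (U × V → U × V → ℝ) :=
  {γ | IsWeightJoining α β γ}

noncomputable def ogjCost {U V : Type*} [Fintype U] [Fintype V]
    (c : U → V → ℝ) (γ : U × V → U × V → ℝ) : ℝ :=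
  ∑ p : U × V, c p.1 p.2 * marginal γ p

open Classical in
/-- The 0-1 label-agreement cost function induced by label functions. -/
noncomputable def labelCost {U V A : Type*} (ψG : U → A) (ψH : V → A) : U → V → ℝ :=
  fun u v => if ψG u = ψH v then 0 else 1

/-- Suppose the label functions `ψ_G` and `ψ_H` are locally injective
(injective on each neighborhood), `ρ_{c_Ψ}(G,H) = 0`, and `γ ∈ J(α,β)` has zero cost.
Then from any pair `(u,v)` with positive marginal, the positively-weighted `γ`-edges
out of `(u,v)` project injectively to `U` and to `V`. -/
theorem locally_injective_labels_give_locally_injective_projections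
    {U V A : Type*} [Fintype U] [Fintype V]
    (α : U → U → ℝ) (β : V → V → ℝ)
    (hα : IsWeightFunction α) (hβ : IsWeightFunction β)
    (ψG : U → A) (ψH : V → A)
    (hlocG : ∀ u u₁ u₂ : U, 0 < α u u₁ → 0 < α u u₂ → ψG u₁ = ψG u₂ → u₁ = u₂)
    (hlocH : ∀ v v₁ v₂ : V, 0 < β v v₁ → 0 < β v v₂ → ψH v₁ = ψH v₂ → v₁ = v₂)
    (hρ : sInf {x : ℝ | ∃ γ' ∈ weightJoinings α β, x = ogjCost (labelCost ψG ψH) γ'} = 0)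
    (γ : U × V → U × V → ℝ)
    (hγ : γ ∈ weightJoinings α β)
    (hcost : ogjCost (labelCost ψG ψH) γ = 0) :
    ∀ u : U, ∀ v : V, 0 < marginal γ (u, v) →
      (∀ u₁ : U, ∀ v₁ v₁' : V,
        0 < γ (u, v) (u₁, v₁) → 0 < γ (u, v) (u₁, v₁') → v₁ = v₁') ∧
      (∀ u₁ u₁' : U, ∀ v₁ : V,
        0 < γ (u, v) (u₁, v₁) → 0 < γ (u, v) (u₁', v₁) → u₁ = u₁') := by

  obtain ⟨⟨hnn, hsymm, _⟩, hU, hV, hTα, hTβ⟩ := hγ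
  -- marginal γ is nonneg
  have hmnn : ∀ p : U × V, 0 ≤ marginal γ p := fun p =>
    Finset.sum_nonneg fun q _ => hnn p q
  -- labels agree on positive-marginal pairs
  have hlab : ∀ p : U × V, 0 < marginal γ p → ψG p.1 = ψH p.2 := by
    intro p hp
    by_contra hne
    have hterm : ∀ q ∈ (Finset.univ : Finset (U × V)),
        0 ≤ labelCost ψG ψH q.1 q.2 * marginal γ q := by
      intro q _
      apply mul_nonneg _ (hmnn q)
      unfold labelCost
      split <;> norm_num
    have := (Finset.sum_eq_zero_iff_of_nonneg hterm).mp hcost p (Finset.mem_univ p)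
    rw [labelCost] at this
    simp only [hne, if_false, one_mul] at this
    linarith
  -- positive γ-edge from (u,v) to (u₁,v₁) implies α u u₁ > 0 and β v v₁ > 0
  intro u v hm
  have hαu : 0 < marginal α u := by
    have h1 : marginal γ (u, v) ≤ ∑ v', marginal γ (u, v') :=
      Finset.single_le_sum (fun v' _ => hmnn (u, v')) (Finset.mem_univ v)
    rw [hU u] at h1; linarith
  have hβv : 0 < marginal β v := by
    have h1 : marginal γ (u, v) ≤ ∑ u', marginal γ (u', v) :=
      Finset.single_le_sum (fun u' _ => hmnn (u', v)) (Finset.mem_univ u)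
    rw [hV v] at h1; linarith
  have hαpos : ∀ u₁ v₁, 0 < γ (u, v) (u₁, v₁) → 0 < α u u₁ := by
    intro u₁ v₁ hg
    have hs : γ (u, v) (u₁, v₁) ≤ ∑ v', γ (u, v) (u₁, v') :=
      Finset.single_le_sum (fun v' _ => hnn (u, v) (u₁, v')) (Finset.mem_univ v₁)
    have h2 := hTα u u₁ v
    nlinarith [hα.1 u u₁]
  have hβpos : ∀ u₁ v₁, 0 < γ (u, v) (u₁, v₁) → 0 < β v v₁ := by
    intro u₁ v₁ hg
    have hs : γ (u, v) (u₁, v₁) ≤ ∑ u', γ (u, v) (u', v₁) :=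
      Finset.single_le_sum (fun u' _ => hnn (u, v) (u', v₁)) (Finset.mem_univ u₁)
    have h2 := hTβ v v₁ u
    nlinarith [hβ.1 v v₁]
  have hmpos : ∀ u₁ v₁, 0 < γ (u, v) (u₁, v₁) → 0 < marginal γ (u₁, v₁) := by
    intro u₁ v₁ hg
    have hs : γ (u₁, v₁) (u, v) ≤ marginal γ (u₁, v₁) :=
      Finset.single_le_sum (fun q _ => hnn (u₁, v₁) q) (Finset.mem_univ (u, v))
    rw [hsymm] at hs; linarith
  constructor
  · intro u₁ v₁ v₁' h1 h2
    exact hlocH v v₁ v₁' (hβpos u₁ v₁ h1) (hβpos u₁ v₁' h2)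
      ((hlab (u₁, v₁) (hmpos _ _ h1)).symm.trans (hlab (u₁, v₁') (hmpos _ _ h2)))
  · intro u₁ u₁' v₁ h1 h2
    exact hlocG u u₁ u₁' (hαpos u₁ v₁ h1) (hαpos u₁' v₁ h2)
      ((hlab (u₁, v₁) (hmpos _ _ h1)).trans (hlab (u₁', v₁) (hmpos _ _ h2)).symm)
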